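/- Let a > 1 (playing the role of e^β), s > 1 (playing e^r, with s² < L2), and L2 > s². Define g(L1) = (L1 − s)²/(a − 1) on the interval (s, (L2·a/s + s)/(a+1)). Then g is strictly increasing in L1 on this interval, and for L1 in this interval, (L2 − L1·s)²/(a−1) + (L1 − s)²·s²/(a·(a−1)) > (L2 − s²)²/(a² − 1), i.e. Var(Y*(2)) > Var(Y#(2)) strictly. -/
import Mathlib


theorem stmt_19 (a s L2 : ℝ) (ha : 1 < a) (hs : 1 < s) (hL2 : L2 > s ^ 2) :
    StrictMonoOn (fun x : ℝ => (x - s) ^ 2 / (a - 1))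
      (Set.Ioo s ((L2 * a / s + s) / (a + 1))) ∧
    ∀ L1 ∈ Set.Ioo s ((L2 * a / s + s) / (a + 1)),
      (L2 - L1 * s) ^ 2 / (a - 1) + (L1 - s) ^ 2 * s ^ 2 / (a * (a - 1))
        > (L2 - s ^ 2) ^ 2 / (a ^ 2 - 1) := by
  have ha1 : (0:ℝ) < a - 1 := by linarith
  have ha0 : (0:ℝ) < a := by linarith
  have hs0 : (0:ℝ) < s := by linarith
  have ha1' : a - 1 ≠ 0 := ne_of_gt ha1
  have ha0' : a ≠ 0 := ne_of_gt ha0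
  have hap : (0:ℝ) < a + 1 := by linarith
  have hap' : a + 1 ≠ 0 := ne_of_gt hap
  have hs' : s ≠ 0 := ne_of_gt hs0
  have ha2 : a ^ 2 - 1 ≠ 0 := by nlinarith
  constructor
  · intro x hx y hy hxy
    simp only
    rw [div_lt_div_iff₀ ha1 ha1]
    have hx1 := hx.1
    have hy1 := hy.1
    nlinarith [mul_pos ha1 (mul_pos (sub_pos.mpr hxy) (show (0:ℝ) < x + y - 2*s by linarith))]
  · intro L1 hL1
    obtain ⟨h1, h2⟩ := hL1
    have hid : (L2 - L1 * s) ^ 2 / (a - 1) + (L1 - s) ^ 2 * s ^ 2 / (a * (a - 1))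
        - (L2 - s ^ 2) ^ 2 / (a ^ 2 - 1)
        = ((s ^ 2 / a + s ^ 2) / (a - 1)) * (L1 - (L2 * a / s + s) / (a + 1)) ^ 2 := by
      field_simp
      ring
    have hK : (0:ℝ) < (s ^ 2 / a + s ^ 2) / (a - 1) := by positivity
    have hsq : (0:ℝ) < (L1 - (L2 * a / s + s) / (a + 1)) ^ 2 := by
      have : L1 - (L2 * a / s + s) / (a + 1) ≠ 0 := by
        intro h
        have : L1 = (L2 * a / s + s) / (a + 1) := by linarith
        rw [this] at h2
        exact lt_irrefl _ h2
      positivity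
    nlinarith [mul_pos hK hsq]
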